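/- If K is a bounded symmetric probability density on ℝ, f is a bounded density continuous at 0, and h_n → 0, then Var(X_{n,1}) → f(0)·∫K²(u)du, where X_{n,1} = h_n^{-1/2}[K(X₁/h_n) − E K(X₁/h_n)] and X₁ has density f. -/

import Mathlib

open MeasureTheory ProbabilityTheory Filter
open scoped ENNReal NNReal

/-- If `K` is a bounded symmetric probability density on ℝ, `f` is a bounded density
continuous at 0, and `h n → 0`, then the variance of
`X_{n,1} = h_n^{-1/2} (K(X₁/h_n) - E K(X₁/h_n))` converges to `f 0 * ∫ K²`. -/
theorem variance_kernel_tendsto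
    {Ω : Type*} [MeasurableSpace Ω] (P : Measure Ω) [IsProbabilityMeasure P]
    (X₁ : Ω → ℝ) (hX₁ : Measurable X₁)
    (f K : ℝ → ℝ)
    -- f is a bounded density, continuous at 0
    (hf_nonneg : ∀ x, 0 ≤ f x) (hf_bdd : ∃ M, ∀ x, f x ≤ M)
    (hf_int : Integrable f) (hf_one : ∫ x, f x = 1)
    (hf_cont : ContinuousAt f 0)
    (hf_density : P.map X₁ = volume.withDensity (fun x => ENNReal.ofReal (f x)))
    -- K is a bounded symmetric probability density
    (hK_meas : Measurable K)
    (hK_nonneg : ∀ x, 0 ≤ K x) (hK_bdd : ∃ M, ∀ x, K x ≤ M)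
    (hK_symm : ∀ x, K (-x) = K x)
    (hK_int : Integrable K) (hK_one : ∫ x, K x = 1)
    -- bandwidths
    (h : ℕ → ℝ) (h_pos : ∀ n, 0 < h n) (h_to_zero : Tendsto h atTop (nhds 0)) :
    Tendsto
      (fun n => variance (fun ω =>
        (h n) ^ (-(1:ℝ)/2) * (K (X₁ ω / h n) - ∫ ω', K (X₁ ω' / h n) ∂P)) P)
      atTop (nhds (f 0 * ∫ u, (K u) ^ 2)) := by
  obtain ⟨Mf, hMf⟩ := hf_bdd
  obtain ⟨MK, hMK⟩ := hK_bdd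
  have hMf0 : 0 ≤ Mf := le_trans (hf_nonneg 0) (hMf 0)
  have hMK0 : 0 ≤ MK := le_trans (hK_nonneg 0) (hMK 0)
  -- expectation of g(X₁) via the density
  have hexp : ∀ g : ℝ → ℝ, Measurable g → ∫ ω, g (X₁ ω) ∂P = ∫ x, f x * g x := by
    intro g hg
    rw [← integral_map hX₁.aemeasurable hg.aestronglyMeasurable, hf_density]
    have heq : (fun x => ENNReal.ofReal (f x)) = fun x => ((f x).toNNReal : ℝ≥0∞) := rfl
    rw [heq, integral_withDensity_eq_integral_smul₀
      hf_int.aemeasurable.real_toNNReal g]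
    congr 1; ext x
    simp [NNReal.smul_def, Real.coe_toNNReal _ (hf_nonneg x)]
  set I : ℕ → ℝ := fun n => ∫ u, K u ^ 2 * f (h n * u) with hI
  set J : ℕ → ℝ := fun n => ∫ u, K u * f (h n * u) with hJ
  have hfn_aesm : ∀ n, AEStronglyMeasurable (fun u => f (h n * u)) volume :=
    fun n => (hf_int.comp_mul_left' (h_pos n).ne').aestronglyMeasurable
  have hKsq_int : Integrable (fun u => K u ^ 2) := by
    refine (hK_int.const_mul MK).mono ((hK_meas.pow_const 2).aestronglyMeasurable) ?_
    filter_upwards with u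
    rw [Real.norm_of_nonneg (sq_nonneg _), Real.norm_of_nonneg (mul_nonneg hMK0 (hK_nonneg u)),
      sq]
    exact mul_le_mul_of_nonneg_right (hMK u) (hK_nonneg u)
  have hI_int : ∀ n, Integrable (fun u => K u ^ 2 * f (h n * u)) := by
    intro n
    refine (hKsq_int.mul_const Mf).mono
      (((hK_meas.pow_const 2).aestronglyMeasurable.mul (hfn_aesm n))) ?_
    filter_upwards with u
    rw [Real.norm_of_nonneg (mul_nonneg (sq_nonneg _) (hf_nonneg _)),
      Real.norm_of_nonneg (mul_nonneg (sq_nonneg _) hMf0)]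
    exact mul_le_mul_of_nonneg_left (hMf _) (sq_nonneg _)
  have hJ_int : ∀ n, Integrable (fun u => K u * f (h n * u)) := by
    intro n
    refine (hK_int.mul_const Mf).mono
      ((hK_meas.aestronglyMeasurable.mul (hfn_aesm n))) ?_
    filter_upwards with u
    rw [Real.norm_of_nonneg (mul_nonneg (hK_nonneg _) (hf_nonneg _)),
      Real.norm_of_nonneg (mul_nonneg (hK_nonneg _) hMf0)]
    exact mul_le_mul_of_nonneg_left (hMf _) (hK_nonneg _)
  -- key identity for the variance
  have key : ∀ n, variance (fun ω =>
      (h n) ^ (-(1:ℝ)/2) * (K (X₁ ω / h n) - ∫ ω', K (X₁ ω' / h n) ∂P)) P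
      = I n - h n * J n ^ 2 := by
    intro n
    have hn0 : (h n : ℝ) ≠ 0 := (h_pos n).ne'
    set a : ℝ := (h n) ^ (-(1:ℝ)/2) with ha
    set Y : Ω → ℝ := fun ω => K (X₁ ω / h n) with hYdef
    have hYmeas : Measurable Y := hK_meas.comp (hX₁.div_const _)
    have hY2 : MemLp Y 2 P := by
      refine MemLp.mono_exponent ?_ le_top
      exact memLp_top_of_bound hYmeas.aestronglyMeasurable MK
        (ae_of_all _ fun ω => by
          rw [Real.norm_of_nonneg (hK_nonneg _)]; exact hMK _)
    have hYint : Integrable Y P := hY2.integrable one_le_two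
    set m : ℝ := ∫ ω', K (X₁ ω' / h n) ∂P with hm
    have hmY : m = ∫ ω, Y ω ∂P := rfl
    have hZ2 : MemLp (fun ω => a * (Y ω - m)) 2 P :=
      ((hY2.sub (memLp_const m)).const_mul a)
    rw [variance_eq_sub hZ2]
    have hEZ : ∫ ω, a * (Y ω - m) ∂P = 0 := by
      rw [integral_const_mul, integral_sub hYint (integrable_const m),
        integral_const, probReal_univ, one_smul, ← hmY, sub_self, mul_zero]
    have hEZ2 : ∫ ω, (fun ω => a * (Y ω - m)) ω ^ 2 ∂P
        = a ^ 2 * ((∫ ω, Y ω ^ 2 ∂P) - m ^ 2) := by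
      have hexpand : ∀ ω, (a * (Y ω - m)) ^ 2
          = a ^ 2 * (Y ω ^ 2 - 2 * m * Y ω + m ^ 2) := fun ω => by ring
      simp only [hexpand]
      have i1 : Integrable (fun ω => Y ω ^ 2 - 2 * m * Y ω) P :=
        hY2.integrable_sq.sub (hYint.const_mul (2 * m))
      have e1 : ∫ ω, (Y ω ^ 2 - 2 * m * Y ω + m ^ 2) ∂P
          = (∫ ω, (Y ω ^ 2 - 2 * m * Y ω) ∂P) + m ^ 2 := by
        rw [integral_add i1 (integrable_const _), integral_const, probReal_univ,
          one_smul]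
      have e2 : ∫ ω, (Y ω ^ 2 - 2 * m * Y ω) ∂P = (∫ ω, Y ω ^ 2 ∂P) - 2 * m * m := by
        rw [integral_sub hY2.integrable_sq (hYint.const_mul (2 * m)), integral_const_mul, ← hmY]
      rw [integral_const_mul, e1, e2]
      ring
    have ha2 : a ^ 2 = (h n)⁻¹ := by
      rw [ha, ← Real.rpow_natCast ((h n) ^ (-(1:ℝ)/2)) 2, ← Real.rpow_mul (h_pos n).le]
      rw [show (-(1:ℝ)/2) * ((2:ℕ):ℝ) = -1 by norm_num, Real.rpow_neg_one]
    -- compute ∫ Y² and m in terms of I, J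
    have hY2eq : ∫ ω, Y ω ^ 2 ∂P = h n * I n := by
      have := hexp (fun x => K (x / h n) ^ 2) ((hK_meas.comp (measurable_id.div_const _)).pow_const 2)
      rw [show (fun ω => Y ω ^ 2) = fun ω => (fun x => K (x / h n) ^ 2) (X₁ ω) from rfl] at *
      rw [this]
      have heq2 : (fun x => f x * K (x / h n) ^ 2)
          = fun x => (fun u => K u ^ 2 * f (h n * u)) (x / h n) := by
        funext x
        simp only [mul_div_cancel₀ _ hn0]
        ring
      rw [heq2, Measure.integral_comp_div (fun u => K u ^ 2 * f (h n * u)) (h n),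
        abs_of_pos (h_pos n), smul_eq_mul]
    have hmeq : m = h n * J n := by
      rw [hm, hexp (fun x => K (x / h n)) (hK_meas.comp (measurable_id.div_const _))]
      have heq2 : (fun x => f x * K (x / h n))
          = fun x => (fun u => K u * f (h n * u)) (x / h n) := by
        funext x
        simp only [mul_div_cancel₀ _ hn0]
        ring
      rw [heq2, Measure.integral_comp_div (fun u => K u * f (h n * u)) (h n),
        abs_of_pos (h_pos n), smul_eq_mul]
    have hEZ' : ∫ ω, (fun ω => a * (Y ω - m)) ω ∂P = 0 := hEZ
    simp only [Pi.pow_apply]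
    rw [show (∫ ω, (a * (Y ω - m)) ^ 2 ∂P) = a ^ 2 * ((∫ ω, Y ω ^ 2 ∂P) - m ^ 2) from hEZ2,
      hEZ', hY2eq, hmeq, ha2]
    field_simp
    ring
  simp only [key]
  -- limits
  have hlimI : Tendsto I atTop (nhds (f 0 * ∫ u, K u ^ 2)) := by
    have hgoal : Tendsto I atTop (nhds (∫ u, K u ^ 2 * f 0)) := by
      refine tendsto_integral_of_dominated_convergence (fun u => MK * K u * Mf)
        (fun n => (hI_int n).aestronglyMeasurable) ?_ (fun n => ae_of_all _ fun u => ?_)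
        (ae_of_all _ fun u => ?_)
      · exact (hK_int.const_mul MK).mul_const Mf
      · rw [Real.norm_of_nonneg (mul_nonneg (sq_nonneg _) (hf_nonneg _))]
        have h1 : K u ^ 2 ≤ MK * K u := by
          rw [sq]; exact mul_le_mul_of_nonneg_right (hMK u) (hK_nonneg u)
        exact mul_le_mul h1 (hMf _) (hf_nonneg _) (mul_nonneg hMK0 (hK_nonneg u))
      · have h2 : Tendsto (fun n => h n * u) atTop (nhds 0) := by
          simpa using h_to_zero.mul_const u
        exact (hf_cont.tendsto.comp h2).const_mul (K u ^ 2)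
    have : (∫ u, K u ^ 2 * f 0) = f 0 * ∫ u, K u ^ 2 := by
      rw [integral_mul_const]; ring
    rwa [this] at hgoal
  have hJb : ∀ n, |J n| ≤ Mf := by
    intro n
    calc |J n| ≤ ∫ u, |K u| * |f (h n * u)| := by
          simpa [Real.norm_eq_abs, abs_mul] using norm_integral_le_integral_norm
            (fun u => K u * f (h n * u))
      _ ≤ ∫ u, K u * Mf := by
          refine integral_mono ?_ (hK_int.mul_const Mf) fun u => ?_
          · simpa [abs_mul] using (hJ_int n).abs
          · rw [abs_of_nonneg (hK_nonneg u), abs_of_nonneg (hf_nonneg _)]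
            exact mul_le_mul_of_nonneg_left (hMf _) (hK_nonneg _)
      _ = Mf := by rw [integral_mul_const, hK_one, one_mul]
  have hlimJ : Tendsto (fun n => h n * J n ^ 2) atTop (nhds 0) := by
    have hub : Tendsto (fun n => h n * Mf ^ 2) atTop (nhds 0) := by
      simpa using h_to_zero.mul_const (Mf ^ 2)
    refine squeeze_zero (fun n => mul_nonneg (h_pos n).le (sq_nonneg _)) (fun n => ?_) hub
    have : J n ^ 2 ≤ Mf ^ 2 := by
      rw [← sq_abs]
      exact pow_le_pow_left₀ (abs_nonneg _) (hJb n) 2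
    exact mul_le_mul_of_nonneg_left this (h_pos n).le
  simpa using hlimI.sub hlimJ
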